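/- Assume there exists a κ⁺-independent family of 2^λ functions from λ to κ, where κ < 2^λ. Then no family D ⊆ ^λκ of cardinality < 2^λ is dominating in the everywhere domination order; hence cf(^λκ, ≤) = 2^λ. -/

import Mathlib

open Cardinal Order

/-- The cofinality of the everywhere (pointwise) domination order on functions `X → K`. -/
noncomputable def everyCof (X K : Type*) [LE K] : Cardinal :=
  sInf {c | ∃ D : Set (X → K), #D = c ∧ ∀ f : X → K, ∃ g ∈ D, ∀ x, f x ≤ g x}

/-- The cofinality of the eventual domination order on functions `X → K`. -/
noncomputable def evenCof (X K : Type*) [LE X] [LE K] : Cardinal :=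
  sInf {c | ∃ D : Set (X → K), #D = c ∧
    ∀ f : X → K, ∃ g ∈ D, ∃ a : X, ∀ b : X, a ≤ b → f b ≤ g b}

/-- Pigeonhole: if every fiber of `f : α → β` has cardinality at most `k`,
then `#α ≤ #β * k`. -/
lemma mk_le_mul_of_fibers_le {α β : Type u} (f : α → β) (k : Cardinal.{u})
    (h : ∀ b, #(f ⁻¹' {b}) ≤ k) : #α ≤ #β * k := by
  calc #α = #(Σ b, f ⁻¹' {b}) := mk_congr (Equiv.sigmaFiberEquiv f).symm
    _ = Cardinal.sum (fun b => #(f ⁻¹' {b})) := mk_sigma _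
    _ ≤ Cardinal.sum (fun _ : β => k) := Cardinal.sum_le_sum _ _ h
    _ = #β * k := Cardinal.sum_const' β k

theorem stmt_10 (k l : Cardinal) (hk : ℵ₀ ≤ k) (hl : ℵ₀ ≤ l) (hk2 : k < 2 ^ l)
    (F : Set (l.ord.ToType → k.ord.ToType)) (hF : #F = 2 ^ l)
    (hind : ∀ F₀ ⊆ F, #F₀ ≤ k →
      ∀ φ : F₀ → k.ord.ToType, ∃ x : l.ord.ToType,
        ∀ f : F₀, (f : l.ord.ToType → k.ord.ToType) x = φ f) :
    (∀ D : Set (l.ord.ToType → k.ord.ToType), #D < 2 ^ l →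
      ¬ ∀ f : l.ord.ToType → k.ord.ToType, ∃ g ∈ D, ∀ x, f x ≤ g x) ∧
    everyCof l.ord.ToType k.ord.ToType = 2 ^ l := by
  have hkk : #(k.ord.ToType) = k := by rw [Cardinal.mk_toType, Cardinal.card_ord]
  have hkne : Nonempty k.ord.ToType := by
    rw [Ordinal.toType_nonempty_iff_ne_zero]
    intro h0
    have := Cardinal.card_ord k
    rw [h0] at this
    simp at this
    exact (Cardinal.aleph0_pos.trans_le hk).ne' this.symm
  have hnomax : NoMaxOrder k.ord.ToType := Cardinal.noMaxOrder hk
  have main : ∀ D : Set (l.ord.ToType → k.ord.ToType), #D < 2 ^ l →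
      ¬ ∀ f : l.ord.ToType → k.ord.ToType, ∃ g ∈ D, ∀ x, f x ≤ g x := by
    intro D hD hdom
    choose G hG hdomG using fun f : F => hdom f
    set G' : F → D := fun f => ⟨G f, hG f⟩ with hG'
    -- some fiber of G' has cardinality > k
    have hfib : ∃ d : D, k < #(G' ⁻¹' {d}) := by
      by_contra hno
      push_neg at hno
      have := mk_le_mul_of_fibers_le G' k hno
      rw [hF] at this
      have hlt : #D * k < 2 ^ l := by
        calc #D * k ≤ max (max #D k) ℵ₀ := Cardinal.mul_le_max _ _
          _ < 2 ^ l := by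
            apply max_lt (max_lt hD hk2)
            exact lt_of_le_of_lt hk hk2
      exact absurd this (not_le_of_gt hlt)
    obtain ⟨d, hd⟩ := hfib
    have hle : k ≤ #(G' ⁻¹' {d}) := hd.le
    have hle2 : #k.ord.ToType ≤ #(G' ⁻¹' {d}) := by rw [hkk]; exact hle
    obtain ⟨e⟩ := Cardinal.le_def _ _ |>.1 hle2
    set E : k.ord.ToType → (l.ord.ToType → k.ord.ToType) :=
      fun y => ((e y : F) : l.ord.ToType → k.ord.ToType) with hE
    have hEinj : Function.Injective E := by
      intro a b hab
      exact e.injective (Subtype.ext (Subtype.ext hab))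
    set F₀ : Set (l.ord.ToType → k.ord.ToType) := Set.range E with hF₀
    have hsub : F₀ ⊆ F := by
      rintro f ⟨y, rfl⟩
      exact ((e y : F)).2
    have hcard : #F₀ ≤ k := by
      rw [hF₀, Cardinal.mk_range_eq E hEinj, hkk]
    set φ : F₀ → k.ord.ToType := fun f => Function.invFun E f.1 with hφ
    obtain ⟨x, hx⟩ := hind F₀ hsub hcard φ
    -- every element of k.ord.ToType is ≤ d.1 x
    have hall : ∀ z : k.ord.ToType, z ≤ (d : l.ord.ToType → k.ord.ToType) x := by
      intro z
      have hmem : E z ∈ F₀ := ⟨z, rfl⟩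
      have hφz : φ ⟨E z, hmem⟩ = z := by
        rw [hφ]
        exact Function.leftInverse_invFun hEinj z
      have hEz : E z x = z := by
        have := hx ⟨E z, hmem⟩
        rw [hφz] at this
        exact this
      -- E z is dominated by d
      have hfiber : G' (e z) = d := e z |>.2
      have hdomz : E z x ≤ (d : l.ord.ToType → k.ord.ToType) x := by
        have := hdomG (e z : F) x
        rw [← hfiber]
        exact this
      rw [hEz] at hdomz
      exact hdomz
    obtain ⟨z, hz⟩ := hnomax.exists_gt ((d : l.ord.ToType → k.ord.ToType) x)
    exact absurd (hall z) (not_le_of_gt hz)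
  refine ⟨main, ?_⟩
  -- everyCof = 2 ^ l
  have hll : #(l.ord.ToType) = l := by rw [Cardinal.mk_toType, Cardinal.card_ord]
  have huniv : #(Set.univ : Set (l.ord.ToType → k.ord.ToType)) = 2 ^ l := by
    rw [Cardinal.mk_univ, ← Cardinal.power_def, hkk, hll]
    apply le_antisymm
    · calc k ^ l ≤ (2 ^ l) ^ l := Cardinal.power_le_power_right hk2.le
        _ = 2 ^ (l * l) := by rw [← Cardinal.power_mul]
        _ = 2 ^ l := by rw [Cardinal.mul_eq_self hl]
    · exact Cardinal.power_le_power_right ((Cardinal.nat_lt_aleph0 2).le.trans hk)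
  have hmem : 2 ^ l ∈ {c | ∃ D : Set (l.ord.ToType → k.ord.ToType), #D = c ∧
      ∀ f : l.ord.ToType → k.ord.ToType, ∃ g ∈ D, ∀ x, f x ≤ g x} :=
    ⟨Set.univ, huniv, fun f => ⟨f, Set.mem_univ f, fun x => le_refl _⟩⟩
  apply le_antisymm
  · exact csInf_le' hmem
  · apply le_csInf ⟨_, hmem⟩
    rintro c ⟨D, hDc, hDdom⟩
    by_contra hlt
    push_neg at hlt
    exact main D (hDc ▸ hlt) hDdom
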